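/- Let F be a finite field extension of a finite field k, M a k-module, and N a finite-dimensional F-vector space. Then the map sending an F-linear map f : N → F ⊗_k M to (tr_{F/k} ⊗ id_M) ∘ f is an F-linear isomorphism Hom_F(N, F ⊗_k M) ≅ Hom_k(N, M). -/

import Mathlib

open TensorProduct

/-- The map `tr_{F/k} ⊗ id_M : F ⊗_k M → M`. -/
noncomputable def trTensor (k F M : Type*) [Field k] [Field F] [Algebra k F]
    [AddCommGroup M] [Module k M] : F ⊗[k] M →ₗ[k] M :=
  TensorProduct.lift ((LinearMap.lsmul k M).comp (Algebra.trace k F))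

section Aux

variable {k F M N : Type*} [Field k] [Field F] [Algebra k F]
    [AddCommGroup M] [Module k M]
    [AddCommGroup N] [Module F N] [Module k N] [IsScalarTower k F N]

lemma trTensor_tmul (a : F) (m : M) :
    trTensor k F M (a ⊗ₜ[k] m) = Algebra.trace k F a • m := rfl

/-- The `k`-linear map `a ↦ g (a • w)`. -/
def psiAux (g : N →ₗ[k] M) (w : N) : F →ₗ[k] M where
  toFun a := g (a • w)
  map_add' x y := by simp [add_smul]
  map_smul' r x := by simp [smul_assoc]

@[simp] lemma psiAux_apply (g : N →ₗ[k] M) (w : N) (a : F) :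
    psiAux g w a = g (a • w) := rfl

variable [FiniteDimensional k F] [Algebra.IsSeparable k F]

lemma stmt_aux :
    Function.Bijective
      (fun f : N →ₗ[F] (F ⊗[k] M) => (trTensor k F M).comp (f.restrictScalars k)) := by
  classical
  set B := Algebra.traceForm k F with hBdef
  have hB : B.Nondegenerate := traceForm_nondegenerate k F
  have hsym : B.IsSymm := Algebra.traceForm_isSymm k
  set b := Module.finBasis k F with hbdef
  set d := B.dualBasis hB b with hddef
  have hrepr : ∀ (a : F) i, d.repr a i = Algebra.trace k F (a * b i) := by
    intro a i
    rw [hddef, LinearMap.BilinForm.dualBasis_repr_apply, hBdef, Algebra.traceForm_apply]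
  -- expansion in the basis `d`
  have E2 : ∀ a : F, ∑ i, (Algebra.trace k F (a * b i)) • d i = a :=
    fun a => (Finset.sum_congr rfl fun i _ => by rw [← hrepr]).trans (d.sum_repr a)
  have hdd : B.dualBasis hB d = b := LinearMap.BilinForm.dualBasis_dualBasis (B := B) hB hsym b
  have hrepr' : ∀ (a : F) i, b.repr a i = Algebra.trace k F (a * d i) := by
    intro a i
    rw [← hdd, LinearMap.BilinForm.dualBasis_repr_apply, hBdef, Algebra.traceForm_apply]
  -- expansion in the basis `b`
  have E1 : ∀ a : F, ∑ i, (Algebra.trace k F (a * d i)) • b i = a :=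
    fun a => (Finset.sum_congr rfl fun i _ => by rw [← hrepr']).trans (b.sum_repr a)
  -- reconstruction of an element of `F ⊗ M` from the trace pairing
  have K : ∀ x : F ⊗[k] M, ∑ i, d i ⊗ₜ[k] (trTensor k F M ((b i) • x)) = x := by
    intro x
    induction x using TensorProduct.induction_on with
    | zero => simp
    | tmul a m =>
        have h1 : ∀ i : Fin (Module.finrank k F), (b i) • (a ⊗ₜ[k] m) = (b i * a) ⊗ₜ[k] m :=
          fun i => by rw [smul_tmul', smul_eq_mul]
        simp only [h1, trTensor_tmul, tmul_smul]
        simp_rw [smul_tmul']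
        rw [← TensorProduct.sum_tmul]
        have : ∑ i, (Algebra.trace k F (b i * a)) • d i = a := by
          simpa only [mul_comm] using E2 a
        rw [this]
    | add x y hx hy =>
        simp only [smul_add, map_add, tmul_add, Finset.sum_add_distrib]
        rw [hx, hy]
  -- `Θ φ = ∑ i, d i ⊗ φ (b i)` is a right inverse for the trace pairing
  have PT : ∀ (φ : F →ₗ[k] M) (c : F),
      trTensor k F M (c • ∑ i, d i ⊗ₜ[k] φ (b i)) = φ c := by
    intro φ c
    rw [Finset.smul_sum]
    have h1 : ∀ i : Fin (Module.finrank k F),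
        c • (d i ⊗ₜ[k] φ (b i)) = (c * d i) ⊗ₜ[k] φ (b i) :=
      fun i => by rw [smul_tmul', smul_eq_mul]
    simp only [h1, trTensor_tmul, map_sum]
    calc ∑ i, (Algebra.trace k F (c * d i)) • φ (b i)
        = ∑ i, φ ((Algebra.trace k F (c * d i)) • b i) := by simp only [map_smul]
      _ = φ (∑ i, (Algebra.trace k F (c * d i)) • b i) := by rw [map_sum]
      _ = φ c := by rw [E1]
  -- injectivity of the trace pairing
  have Xinj : ∀ x : F ⊗[k] M, (∀ c : F, trTensor k F M (c • x) = 0) → x = 0 := by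
    intro x hx
    rw [← K x]
    simp only [hx, tmul_zero, Finset.sum_const_zero]
  constructor
  · -- injective
    intro f g h
    ext v
    have hsub : ∀ c : F, trTensor k F M (c • (f v - g v)) = 0 := by
      intro c
      have h' : trTensor k F M (f (c • v)) = trTensor k F M (g (c • v)) :=
        congrArg (fun T : N →ₗ[k] M => T (c • v)) h
      rw [smul_sub, map_sub, ← f.map_smul, ← g.map_smul, h', sub_self]
    have := Xinj _ hsub
    rwa [sub_eq_zero] at this
  · -- surjective
    intro g
    have key : ∀ (w : N) (c : F),
        trTensor k F M (c • ∑ i, d i ⊗ₜ[k] g ((b i) • w)) = g (c • w) := by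
      intro w c
      simpa using PT (psiAux g w) c
    refine ⟨{ toFun := fun v => ∑ i, d i ⊗ₜ[k] g ((b i) • v),
              map_add' := ?_, map_smul' := ?_ }, ?_⟩
    · intro v w
      simp only [smul_add, map_add, tmul_add, Finset.sum_add_distrib]
    · intro c v
      simp only [RingHom.id_apply]
      have h0 : (∑ i, d i ⊗ₜ[k] g ((b i) • (c • v)))
          - c • (∑ i, d i ⊗ₜ[k] g ((b i) • v)) = 0 := by
        apply Xinj
        intro e
        have h2 : e • c • (∑ i, d i ⊗ₜ[k] g ((b i) • v))
            = (e * c) • ∑ i, d i ⊗ₜ[k] g ((b i) • v) := smul_smul _ _ _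
        rw [smul_sub, map_sub, key (c • v) e, h2, key v (e * c), smul_smul, sub_self]
      rw [sub_eq_zero] at h0
      exact h0
    · ext v
      simp only [LinearMap.comp_apply, LinearMap.restrictScalars_apply, LinearMap.coe_mk,
        AddHom.coe_mk]
      have := key v 1
      rwa [one_smul, one_smul] at this

end Aux

/-- for a finite extension `F/k` of finite fields, any `k`-module `M` and any
finite-dimensional `F`-vector space `N`, the map `f ↦ (tr_{F/k} ⊗ id_M) ∘ f` is an
`F`-linear bijection `Hom_F(N, F ⊗_k M) ≃ Hom_k(N, M)`. -/
theorem stmt_0 (k F M N : Type*) [Field k] [Fintype k] [Field F] [Fintype F] [Algebra k F]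
    [AddCommGroup M] [Module k M]
    [AddCommGroup N] [Module F N] [Module k N] [IsScalarTower k F N]
    [FiniteDimensional F N] :
    Function.Bijective
      (fun f : N →ₗ[F] (F ⊗[k] M) => (trTensor k F M).comp (f.restrictScalars k)) ∧
    ∀ (c : F) (f : N →ₗ[F] (F ⊗[k] M)) (v : N),
      ((trTensor k F M).comp ((c • f).restrictScalars k)) v
        = ((trTensor k F M).comp (f.restrictScalars k)) (c • v) := by
  haveI : FiniteDimensional k F := Module.Finite.of_finite
  haveI : Algebra.IsSeparable k F := inferInstance
  refine ⟨stmt_aux, ?_⟩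
  intro c f v
  simp only [LinearMap.comp_apply, LinearMap.restrictScalars_apply, LinearMap.smul_apply,
    map_smul]
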